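/- Let A = {0,1}, let k be odd with k ≥ 1, and let n ≥ k+1. Then the Hamming distance between γ^{n,k}_{[0]} and ρ^{n,k}_{[2^n−1]} equals k+1, and the Hamming distance between ρ^{n,k}_{[0]} and γ^{n,k}_{[2^n−1]} equals k+1. -/
import Mathlib


/-- Hamming distance between two words (lists) of the same length:
the number of positions in which they differ. -/
def hammingL {α : Type*} [DecidableEq α] (w w' : List α) : ℕ :=
  ((w.zip w').filter fun q => decide (q.1 ≠ q.2)).length

/-- `w` (restricted to indices `< N`) is a `σ_k`-Gray cycle over `X`:
its terms are pairwise distinct and enumerate `X` (a bijection from `[0, N-1]` onto `X`),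
two consecutive terms have the same length and Hamming distance exactly `k`, and so do
the first and the last term. -/
def IsGrayCycleOn {α : Type*} [DecidableEq α] (k N : ℕ) (w : ℕ → List α)
    (X : Set (List α)) : Prop :=
  Set.BijOn w (Set.Iio N) X ∧
  (∀ i, 1 ≤ i → i < N →
    (w (i - 1)).length = (w i).length ∧ hammingL (w (i - 1)) (w i) = k) ∧
  (0 < N → (w (N - 1)).length = (w 0).length ∧ hammingL (w (N - 1)) (w 0) = k)

/-- The bit complement `θ : 0 ↔ 1` on the binary alphabet `{0,1}`. -/
def cpl (x : Fin 2) : Fin 2 := x + 1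

/-- The bit complement extended letterwise to binary words. -/
def cplW (w : List (Fin 2)) : List (Fin 2) := w.map cpl

/-- The reflected binary Gray code `g^{m,1}` over words of length `m`:
`g^{0,1} = (ε)` and `g^{m+1,1} = (0·g^{m,1}, 1·(g^{m,1})^R)`. -/
def binGray : ℕ → List (List (Fin 2))
  | 0 => [[]]
  | m + 1 =>
      (binGray m).map (fun w => 0 :: w) ++ (binGray m).reverse.map (fun w => 1 :: w)

/-- The sequence `γ^{n0,1}`: `γ^{n0,1}_{[0]} = g^{n0,1}_{[0]}` and
`γ^{n0,1}_{[i]} = g^{n0,1}_{[2^{n0} - i]}` for `1 ≤ i ≤ 2^{n0} - 1`. -/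
def gamma1 (n0 i : ℕ) : List (Fin 2) :=
  if i = 0 then (binGray n0).getD 0 [] else (binGray n0).getD (2 ^ n0 - i) []

/-- The sequence `ρ^{n0,1}`: `ρ^{n0,1}_{[0]} = g^{n0,1}_{[2^{n0}-1]}` and
`ρ^{n0,1}_{[i]} = g^{n0,1}_{[i-1]}` for `1 ≤ i ≤ 2^{n0} - 1`. -/
def rho1 (n0 i : ℕ) : List (Fin 2) :=
  if i = 0 then (binGray n0).getD (2 ^ n0 - 1) [] else (binGray n0).getD (i - 1) []

/-- `grSeq n0 true t i` (resp. `grSeq n0 false t i`) is the term of index `i` of the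
sequence `γ^{n0+2t, 2t+1}` (resp. `ρ^{n0+2t, 2t+1}`), built inductively: the base cases
are `γ^{n0,1}` and `ρ^{n0,1}`, and, writing `i = q·2^m + r` with `m = n0 + 2t` and
`r < 2^m`, `γ^{m+2, (2t+1)+2}_{[i]}` is `θ^r(00)·γ^{m,2t+1}_{[r]}`, `θ^r(01)·ρ^{m,2t+1}_{[r]}`,
`θ^r(11)·γ^{m,2t+1}_{[r]}`, `θ^r(10)·ρ^{m,2t+1}_{[r]}` according to `q = 0, 1, 2, 3`, and
`ρ^{m+2, (2t+1)+2}_{[i]}` is `θ^r(10)·γ^{m,2t+1}_{[r]}`, `θ^r(11)·ρ^{m,2t+1}_{[r]}`,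
`θ^r(01)·γ^{m,2t+1}_{[r]}`, `θ^r(00)·ρ^{m,2t+1}_{[r]}` according to `q = 0, 1, 2, 3`. -/
def grSeq (n0 : ℕ) : Bool → ℕ → ℕ → List (Fin 2)
  | b, 0, i => if b then gamma1 n0 i else rho1 n0 i
  | b, t + 1, i =>
      cplW^[i % 2 ^ (n0 + 2 * t)]
        (if b then
          (if i / 2 ^ (n0 + 2 * t) = 0 then [0, 0]
           else if i / 2 ^ (n0 + 2 * t) = 1 then [0, 1]
           else if i / 2 ^ (n0 + 2 * t) = 2 then [1, 1] else [1, 0])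
         else
          (if i / 2 ^ (n0 + 2 * t) = 0 then [1, 0]
           else if i / 2 ^ (n0 + 2 * t) = 1 then [1, 1]
           else if i / 2 ^ (n0 + 2 * t) = 2 then [0, 1] else [0, 0])) ++
        grSeq n0 (i / 2 ^ (n0 + 2 * t) % 2 == 0) t (i % 2 ^ (n0 + 2 * t))

/-- For odd `k` and `n ≥ k + 1`, `gammaNK n k i` is the term `γ^{n,k}_{[i]}`
(here `n0 = n - k + 1` and `k = 2·(k/2) + 1`). -/
def gammaNK (n k i : ℕ) : List (Fin 2) := grSeq (n + 1 - k) true (k / 2) i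

/-- For odd `k` and `n ≥ k + 1`, `rhoNK n k i` is the term `ρ^{n,k}_{[i]}`. -/
def rhoNK (n k i : ℕ) : List (Fin 2) := grSeq (n + 1 - k) false (k / 2) i

-- auxiliary lemmas

lemma binGray_length (m : ℕ) : (binGray m).length = 2 ^ m := by
  induction m with
  | zero => rfl
  | succ m ih => simp [binGray, ih, pow_succ]; omega

lemma bg0 (m : ℕ) : (binGray m).getD 0 [] = List.replicate m 0 := by
  induction m with
  | zero => rfl
  | succ m ih =>
    have h0 : 0 < (binGray m).length := by rw [binGray_length]; positivity
    rw [binGray]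
    rw [List.getD_eq_getElem _ _ (by simp [binGray_length])]
    rw [List.getElem_append_left (by simpa using h0), List.getElem_map]
    rw [← List.getD_eq_getElem _ [] h0, ih, List.replicate_succ]

lemma bglast (m : ℕ) (hm : 1 ≤ m) :
    (binGray m).getD (2 ^ m - 1) [] = 1 :: List.replicate (m - 1) 0 := by
  obtain ⟨s, rfl⟩ : ∃ s, m = s + 1 := ⟨m - 1, by omega⟩
  have hl : (binGray s).length = 2 ^ s := binGray_length s
  have hp : 0 < 2 ^ s := by positivity
  rw [binGray]
  rw [List.getD_eq_getElem _ _ (by simp [binGray_length, pow_succ]; omega)]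
  rw [List.getElem_append_right (by simp [hl, pow_succ]; omega)]
  rw [List.getElem_map, List.getElem_reverse]
  have : (binGray s).length - 1 - (2 ^ (s + 1) - 1 - ((binGray s).map (0 :: ·)).length) = 0 := by
    simp [hl, pow_succ]; omega
  simp only [this]
  rw [← List.getD_eq_getElem _ [] (by omega), bg0]
  simp

lemma bg1 (m : ℕ) (hm : 1 ≤ m) :
    (binGray m).getD 1 [] = List.replicate (m - 1) 0 ++ [1] := by
  induction m with
  | zero => omega
  | succ m ih =>
    rcases Nat.eq_zero_or_pos m with rfl | hm'
    · rfl
    · have hl : (binGray m).length = 2 ^ m := binGray_length m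
      have hp : 2 ≤ 2 ^ m := by calc 2 = 2^1 := rfl
                                     _ ≤ 2^m := Nat.pow_le_pow_right (by norm_num) hm'
      rw [binGray]
      rw [List.getD_eq_getElem _ _ (by simp [binGray_length]; omega)]
      rw [List.getElem_append_left (by simpa [hl] using by omega), List.getElem_map]
      rw [← List.getD_eq_getElem _ [] (by omega), ih hm']
      have : m + 1 - 1 = (m - 1) + 1 := by omega
      rw [this, List.replicate_succ]
      simp

lemma bg2 (m : ℕ) (hm : 2 ≤ m) :
    (binGray m).getD (2 ^ m - 2) [] = 1 :: (List.replicate (m - 2) 0 ++ [1]) := by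
  obtain ⟨s, rfl⟩ : ∃ s, m = s + 1 := ⟨m - 1, by omega⟩
  have hs : 1 ≤ s := by omega
  have hl : (binGray s).length = 2 ^ s := binGray_length s
  have hp : 2 ≤ 2 ^ s := by calc 2 = 2^1 := rfl
                                 _ ≤ 2^s := Nat.pow_le_pow_right (by norm_num) hs
  have hpow : 2 ^ (s + 1) = 2 * 2 ^ s := by rw [pow_succ]; ring
  rw [binGray]
  rw [List.getD_eq_getElem _ _ (by simp [binGray_length]; omega)]
  rw [List.getElem_append_right (by simp [hl]; omega)]
  rw [List.getElem_map, List.getElem_reverse]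
  have : (binGray s).length - 1 - (2 ^ (s + 1) - 2 - ((binGray s).map (0 :: ·)).length) = 1 := by
    simp [hl]; omega
  simp only [this]
  rw [← List.getD_eq_getElem _ [] (by omega), bg1 s hs]
  simp

lemma hammingL_append {α : Type*} [DecidableEq α] (a b c d : List α)
    (h : a.length = c.length) :
    hammingL (a ++ b) (c ++ d) = hammingL a c + hammingL b d := by
  unfold hammingL
  rw [List.zip_append h, List.filter_append, List.length_append]

lemma hammingL_replicate {α : Type*} [DecidableEq α] (j : ℕ) (x : α) :
    hammingL (List.replicate j x) (List.replicate j x) = 0 := by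
  induction j with
  | zero => rfl
  | succ j ih => simp [hammingL, List.replicate_succ] at ih ⊢

lemma cplW_cplW (l : List (Fin 2)) : cplW (cplW l) = l := by
  unfold cplW
  rw [List.map_map]
  have : cpl ∘ cpl = id := by funext a; fin_cases a <;> rfl
  simp [this]

lemma cplW_iter_two (s : ℕ) (l : List (Fin 2)) : cplW^[2 * s] l = l := by
  induction s generalizing l with
  | zero => rfl
  | succ s ih =>
    have : 2 * (s + 1) = 2 + 2 * s := by omega
    rw [this, Function.iterate_add_apply, ih]
    show cplW (cplW l) = l
    exact cplW_cplW l

lemma cplW_iter_odd {j : ℕ} (h : Odd j) (l : List (Fin 2)) : cplW^[j] l = cplW l := by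
  obtain ⟨s, rfl⟩ := h
  rw [Function.iterate_add_apply, cplW_iter_two, Function.iterate_one]

lemma grKey (t n0 : ℕ) (h : 2 ≤ n0) :
    hammingL (grSeq n0 true t 0) (grSeq n0 false t (2 ^ (n0 + 2 * t) - 1)) = 2 * t + 2 ∧
    hammingL (grSeq n0 false t 0) (grSeq n0 true t (2 ^ (n0 + 2 * t) - 1)) = 2 * t + 2 := by
  induction t with
  | zero =>
    have hp : 4 ≤ 2 ^ n0 := by calc 4 = 2^2 := rfl
                                    _ ≤ 2 ^ n0 := Nat.pow_le_pow_right (by norm_num) h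
    have h1 : 2 ^ (n0 + 2 * 0) = 2 ^ n0 := by norm_num
    have hne : 2 ^ n0 - 1 ≠ 0 := by omega
    constructor
    · show hammingL (gamma1 n0 0) (rho1 n0 (2 ^ (n0 + 2 * 0) - 1)) = 2 * 0 + 2
      rw [h1]
      unfold gamma1 rho1
      rw [if_pos rfl, if_neg hne]
      have : 2 ^ n0 - 1 - 1 = 2 ^ n0 - 2 := by omega
      rw [this, bg0, bg2 n0 h]
      have hrep : List.replicate n0 (0 : Fin 2) =
          [0] ++ (List.replicate (n0 - 2) 0 ++ [0]) := by
        have h' : n0 = 1 + ((n0 - 2) + 1) := by omega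
        conv_lhs => rw [h']
        rw [List.replicate_add, List.replicate_add]
        simp
      rw [hrep, show (1 : Fin 2) :: (List.replicate (n0 - 2) 0 ++ [1]) =
        [1] ++ (List.replicate (n0 - 2) 0 ++ [1]) from rfl]
      rw [hammingL_append _ _ _ _ (by simp),
        hammingL_append _ _ _ _ (by simp), hammingL_replicate]
      rfl
    · show hammingL (rho1 n0 0) (gamma1 n0 (2 ^ (n0 + 2 * 0) - 1)) = 2 * 0 + 2
      rw [h1]
      unfold gamma1 rho1
      rw [if_pos rfl, if_neg hne]
      have : 2 ^ n0 - (2 ^ n0 - 1) = 1 := by omega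
      rw [this, bglast n0 (by omega), bg1 n0 (by omega)]
      have hrep1 : (1 : Fin 2) :: List.replicate (n0 - 1) 0 =
          [1] ++ (List.replicate (n0 - 2) 0 ++ [0]) := by
        have h' : n0 - 1 = (n0 - 2) + 1 := by omega
        conv_lhs => rw [h']
        rw [List.replicate_add]
        simp
      have hrep2 : List.replicate (n0 - 1) (0 : Fin 2) ++ [1] =
          [0] ++ (List.replicate (n0 - 2) 0 ++ [1]) := by
        have h' : n0 - 1 = 1 + (n0 - 2) := by omega
        conv_lhs => rw [h']
        rw [List.replicate_add]
        simp
      rw [hrep1, hrep2]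
      rw [hammingL_append _ _ _ _ (by simp),
        hammingL_append _ _ _ _ (by simp), hammingL_replicate]
      rfl
  | succ t ih =>
    set m := n0 + 2 * t with hm
    have hN : 0 < 2 ^ m := by positivity
    have hNodd : Odd (2 ^ m - 1) := by
      have : 2 ≤ 2 ^ m := by calc 2 = 2^1 := rfl
                                  _ ≤ 2 ^ m := Nat.pow_le_pow_right (by norm_num) (by omega)
      have he : Even (2 ^ m) := (Nat.even_pow).mpr ⟨even_two, by omega⟩
      exact Nat.Even.sub_odd (by omega) he odd_one
    have hi : 2 ^ (n0 + 2 * (t + 1)) - 1 = 2 ^ m * 3 + (2 ^ m - 1) := by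
      have : 2 ^ (n0 + 2 * (t + 1)) = 2 ^ m * 4 := by
        rw [show n0 + 2 * (t + 1) = m + 2 from by omega, pow_add]; ring
      omega
    have hdiv : (2 ^ (n0 + 2 * (t + 1)) - 1) / 2 ^ m = 3 := by
      rw [hi, Nat.mul_add_div hN, Nat.div_eq_of_lt (by omega)]
    have hmod : (2 ^ (n0 + 2 * (t + 1)) - 1) % 2 ^ m = 2 ^ m - 1 := by
      rw [hi, Nat.mul_add_mod, Nat.mod_eq_of_lt (by omega)]
    have e1 : grSeq n0 true (t + 1) 0 = [0, 0] ++ grSeq n0 true t 0 := by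
      show cplW^[0 % 2 ^ m] _ ++ grSeq n0 (0 / 2 ^ m % 2 == 0) t (0 % 2 ^ m) = _
      rw [Nat.zero_mod, Nat.zero_div]
      rfl
    have e2 : grSeq n0 false (t + 1) 0 = [1, 0] ++ grSeq n0 true t 0 := by
      show cplW^[0 % 2 ^ m] _ ++ grSeq n0 (0 / 2 ^ m % 2 == 0) t (0 % 2 ^ m) = _
      rw [Nat.zero_mod, Nat.zero_div]
      rfl
    have e3 : grSeq n0 false (t + 1) (2 ^ (n0 + 2 * (t + 1)) - 1) =
        [1, 1] ++ grSeq n0 false t (2 ^ m - 1) := by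
      show cplW^[_ % 2 ^ m] _ ++ grSeq n0 (_ / 2 ^ m % 2 == 0) t (_ % 2 ^ m) = _
      rw [hdiv, hmod, cplW_iter_odd hNodd]
      rfl
    have e4 : grSeq n0 true (t + 1) (2 ^ (n0 + 2 * (t + 1)) - 1) =
        [0, 1] ++ grSeq n0 false t (2 ^ m - 1) := by
      show cplW^[_ % 2 ^ m] _ ++ grSeq n0 (_ / 2 ^ m % 2 == 0) t (_ % 2 ^ m) = _
      rw [hdiv, hmod, cplW_iter_odd hNodd]
      rfl
    constructor
    · rw [e1, e3, hammingL_append _ _ _ _ (by simp), ih.1]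
      show 2 + (2 * t + 2) = _
      omega
    · rw [e2, e4, hammingL_append _ _ _ _ (by simp), ih.1]
      show 2 + (2 * t + 2) = _
      omega

theorem statement6' (n k : ℕ) (hk1 : 1 ≤ k) (hk : Odd k) (hn : k + 1 ≤ n) :
    hammingL (gammaNK n k 0) (rhoNK n k (2 ^ n - 1)) = k + 1 ∧
    hammingL (rhoNK n k 0) (gammaNK n k (2 ^ n - 1)) = k + 1 := by
  obtain ⟨t, rfl⟩ := hk
  have hk2 : (2 * t + 1) / 2 = t := by omega
  have hn0 : n + 1 - (2 * t + 1) + 2 * t = n := by omega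
  have := grKey t (n + 1 - (2 * t + 1)) (by omega)
  unfold gammaNK rhoNK
  rw [hk2]
  rw [show (2:ℕ) ^ n = 2 ^ (n + 1 - (2 * t + 1) + 2 * t) from by rw [hn0]]
  exact ⟨this.1.trans (by omega), this.2.trans (by omega)⟩

/-- For `k` odd with `k ≥ 1` and `n ≥ k + 1`, the Hamming distance between
`γ^{n,k}_{[0]}` and `ρ^{n,k}_{[2^n - 1]}` equals `k + 1`, and the Hamming distance
between `ρ^{n,k}_{[0]}` and `γ^{n,k}_{[2^n - 1]}` equals `k + 1`. -/
theorem statement6 (n k : ℕ) (hk1 : 1 ≤ k) (hk : Odd k) (hn : k + 1 ≤ n) :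
    hammingL (gammaNK n k 0) (rhoNK n k (2 ^ n - 1)) = k + 1 ∧
    hammingL (rhoNK n k 0) (gammaNK n k (2 ^ n - 1)) = k + 1 :=
  statement6' n k hk1 hk hn
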